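/- Each of the functions ζ̂_k(τ,θ,φ) = (2 sinh τ + tanh τ / cosh τ) · f_k(θ,φ), for k = 1,2,3 with f₁ = cos θ, f₂ = sin θ cos φ, f₃ = sin θ sin φ, satisfies □ζ̂_k + 3ζ̂_k = 0 on dS₃ and is even under the parity map (τ,θ,φ) ↦ (-τ, π-θ, φ+π). -/

import Mathlib

noncomputable section

open Real

/-- Points of the coordinate chart `(τ, θ, φ)` on three-dimensional de Sitter space. -/
abbrev Pt := Fin 3 → ℝ

/-- Partial derivative along the `i`-th coordinate. -/
def pd (i : Fin 3) (f : Pt → ℝ) (x : Pt) : ℝ :=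
  fderiv ℝ f x (Pi.single i 1)

/-- The dS₃ metric `h⁽⁰⁾ = -dτ² + cosh²τ (dθ² + sin²θ dφ²)`. -/
def gmet (x : Pt) (a b : Fin 3) : ℝ :=
  if a = b then
    if a = 0 then -1
    else if a = 1 then (Real.cosh (x 0))^2
    else (Real.cosh (x 0))^2 * (Real.sin (x 1))^2
  else 0

/-- The inverse dS₃ metric `h⁽⁰⁾^{ab}`. -/
def ginv (x : Pt) (a b : Fin 3) : ℝ :=
  if a = b then
    if a = 0 then -1
    else if a = 1 then ((Real.cosh (x 0))^2)⁻¹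
    else ((Real.cosh (x 0))^2 * (Real.sin (x 1))^2)⁻¹
  else 0

/-- Christoffel symbols `Γ^c_{ab}` of the Levi-Civita connection of `gmet`. -/
def chr (x : Pt) (a b c : Fin 3) : ℝ :=
  (1/2) * ∑ d, ginv x c d *
    (pd a (fun y => gmet y d b) x + pd b (fun y => gmet y a d) x
      - pd d (fun y => gmet y a b) x)

/-- Covariant derivative of a covector: `(D t)_{ab} = D_a t_b`. -/
def covD1 (t : Pt → Fin 3 → ℝ) (x : Pt) (a b : Fin 3) : ℝ :=
  pd a (fun y => t y b) x - ∑ c, chr x a b c * t x c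

/-- Covariant derivative of a rank-2 tensor: `(D T)_{abc} = D_a T_{bc}`. -/
def covD2 (T : Pt → Fin 3 → Fin 3 → ℝ) (x : Pt) (a b c : Fin 3) : ℝ :=
  pd a (fun y => T y b c) x - ∑ d, chr x a b d * T x d c - ∑ d, chr x a c d * T x b d

/-- Covariant derivative of a rank-3 tensor: `(D T)_{abcd} = D_a T_{bcd}`. -/
def covD3 (T : Pt → Fin 3 → Fin 3 → Fin 3 → ℝ) (x : Pt) (a b c d : Fin 3) : ℝ :=
  pd a (fun y => T y b c d) x - ∑ e, chr x a b e * T x e c d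
    - ∑ e, chr x a c e * T x b e d - ∑ e, chr x a d e * T x b c e

/-- Hessian `D_a D_b f` of a scalar. -/
def hess (f : Pt → ℝ) (x : Pt) (a b : Fin 3) : ℝ :=
  covD1 (fun y c => pd c f y) x a b

/-- The d'Alembertian `□ f = h⁽⁰⁾^{ab} D_a D_b f` on scalars. -/
def boxS (f : Pt → ℝ) (x : Pt) : ℝ :=
  ∑ a, ∑ b, ginv x a b * hess f x a b

/-- The d'Alembertian `□ = D^c D_c` on covectors. -/
def box1 (t : Pt → Fin 3 → ℝ) (x : Pt) (b : Fin 3) : ℝ :=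
  ∑ a, ∑ c, ginv x a c * covD2 (fun y => covD1 t y) x a c b

/-- The d'Alembertian `□ = D^c D_c` on rank-2 tensors. -/
def box2 (T : Pt → Fin 3 → Fin 3 → ℝ) (x : Pt) (b c : Fin 3) : ℝ :=
  ∑ a, ∑ d, ginv x a d * covD3 (fun y => covD2 T y) x a d b c

/-- The Levi-Civita symbol on three indices. -/
def levi (a b c : Fin 3) : ℝ :=
  ((((b : ℤ) - a) * ((c : ℤ) - b) * ((c : ℤ) - a) : ℤ) : ℝ) / 2

/-- The volume form `ε_{abc}` of dS₃, normalized by `ε_{τθφ} = cosh²τ sin θ`. -/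
def eps (x : Pt) (a b c : Fin 3) : ℝ :=
  (Real.cosh (x 0))^2 * Real.sin (x 1) * levi a b c

/-- The curl `(curl T)_{ab} = ε_a{}^{cd} D_c T_{db}` of a rank-2 tensor. -/
def curl (T : Pt → Fin 3 → Fin 3 → ℝ) (x : Pt) (a b : Fin 3) : ℝ :=
  ∑ c, ∑ d, ∑ e, ∑ f, ginv x c e * ginv x d f * eps x a e f * covD2 T x c d b

/-- The three `l = 1` spherical harmonics `f₁ = cos θ`, `f₂ = sin θ cos φ`, `f₃ = sin θ sin φ`. -/
def sph (k : Fin 3) (x : Pt) : ℝ :=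
  if k = 0 then Real.cos (x 1)
  else if k = 1 then Real.sin (x 1) * Real.cos (x 2)
  else Real.sin (x 1) * Real.sin (x 2)

/-- `ζ̂_k = (2 sinh τ + tanh τ / cosh τ) · f_k`. -/
def zetahatk (k : Fin 3) (x : Pt) : ℝ :=
  (2 * Real.sinh (x 0) + Real.tanh (x 0) / Real.cosh (x 0)) * sph k x

/-- The parity map `(τ, θ, φ) ↦ (-τ, π - θ, φ + π)`. -/
def parity (x : Pt) : Pt := ![-(x 0), Real.pi - x 1, x 2 + Real.pi]

/-! ### Auxiliary machinery -/

lemma cosh_ne (t : ℝ) : Real.cosh t ≠ 0 := (Real.cosh_pos t).ne'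

/-- Radial profile `g(τ) = 2 sinh τ + sinh τ / cosh² τ`. -/
def gfun (t : ℝ) : ℝ := 2 * Real.sinh t + Real.sinh t / Real.cosh t ^ 2
/-- First derivative of `gfun`. -/
def gper (t : ℝ) : ℝ :=
  2 * Real.cosh t + (Real.cosh t ^ 2 - 2 * Real.sinh t ^ 2) / Real.cosh t ^ 3
/-- Second derivative of `gfun`. -/
def gsec (t : ℝ) : ℝ :=
  2 * Real.sinh t + (6 * Real.sinh t ^ 3 - 5 * Real.sinh t * Real.cosh t ^ 2) / Real.cosh t ^ 4

lemma hasDerivAt_gfun (t : ℝ) : HasDerivAt gfun (gper t) t := by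
  have h := ((Real.hasDerivAt_sinh t).const_mul 2).fun_add
    ((Real.hasDerivAt_sinh t).fun_div ((Real.hasDerivAt_cosh t).fun_pow 2) (pow_ne_zero 2 (cosh_ne t)))
  refine h.congr_deriv ?_
  have hc := cosh_ne t
  rw [gper]
  field_simp
  ring

lemma hasDerivAt_gper (t : ℝ) : HasDerivAt gper (gsec t) t := by
  have h := ((Real.hasDerivAt_cosh t).const_mul 2).fun_add
    ((((Real.hasDerivAt_cosh t).fun_pow 2).fun_sub (((Real.hasDerivAt_sinh t).fun_pow 2).const_mul 2)).fun_div
      ((Real.hasDerivAt_cosh t).fun_pow 3) (pow_ne_zero 3 (cosh_ne t)))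
  refine h.congr_deriv ?_
  have hc := cosh_ne t
  rw [gsec]
  field_simp
  ring

lemma hd_cosh_sq (t : ℝ) :
    HasDerivAt (fun t => Real.cosh t ^ 2) (2 * Real.cosh t * Real.sinh t) t := by
  simpa [mul_comm, mul_assoc, mul_left_comm] using (Real.hasDerivAt_cosh t).fun_pow 2

lemma hd_sin_sq (t : ℝ) :
    HasDerivAt (fun t => Real.sin t ^ 2) (2 * Real.sin t * Real.cos t) t := by
  simpa [mul_comm, mul_assoc, mul_left_comm] using (Real.hasDerivAt_sin t).fun_pow 2

lemma hd_const (c t : ℝ) : HasDerivAt (fun _ : ℝ => c) 0 t := hasDerivAt_const t c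

lemma pd_const (i : Fin 3) (x : Pt) (c : ℝ) : pd i (fun _ => c) x = 0 := by
  simp [pd]

lemma pd_m3 (F G H F' G' H' : ℝ → ℝ)
    (hF : ∀ t, HasDerivAt F (F' t) t) (hG : ∀ t, HasDerivAt G (G' t) t)
    (hH : ∀ t, HasDerivAt H (H' t) t) (i : Fin 3) (x : Pt) :
    pd i (fun y : Pt => F (y 0) * G (y 1) * H (y 2)) x =
      if i = 0 then F' (x 0) * G (x 1) * H (x 2)
      else if i = 1 then F (x 0) * G' (x 1) * H (x 2)
      else F (x 0) * G (x 1) * H' (x 2) := by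
  have p0 : HasFDerivAt (fun y : Pt => y 0)
      (ContinuousLinearMap.proj (R := ℝ) (φ := fun _ : Fin 3 => ℝ) 0) x :=
    hasFDerivAt_apply 0 x
  have p1 : HasFDerivAt (fun y : Pt => y 1)
      (ContinuousLinearMap.proj (R := ℝ) (φ := fun _ : Fin 3 => ℝ) 1) x :=
    hasFDerivAt_apply 1 x
  have p2 : HasFDerivAt (fun y : Pt => y 2)
      (ContinuousLinearMap.proj (R := ℝ) (φ := fun _ : Fin 3 => ℝ) 2) x :=
    hasFDerivAt_apply 2 x
  have h0 := (hF (x 0)).hasFDerivAt.comp x p0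
  have h1 := (hG (x 1)).hasFDerivAt.comp x p1
  have h2 := (hH (x 2)).hasFDerivAt.comp x p2
  have hm := (h0.fun_mul h1).fun_mul h2
  simp only [Function.comp_def] at hm
  rw [pd, hm.fderiv]
  fin_cases i <;>
    simp [ContinuousLinearMap.add_apply, ContinuousLinearMap.smul_apply,
      ContinuousLinearMap.comp_apply, ContinuousLinearMap.proj_apply,
      Pi.single_eq_same, Pi.single_eq_of_ne, ContinuousLinearMap.smulRight_apply,
      ContinuousLinearMap.one_apply] <;> ring

lemma pd_gmet_c (i : Fin 3) (x : Pt) (a b : Fin 3) (c : ℝ) (h : ∀ y, gmet y a b = c) :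
    pd i (fun y => gmet y a b) x = 0 := by
  have e : (fun y => gmet y a b) = fun _ : Pt => c := funext h
  rw [e, pd_const]

@[simp] lemma pd_gmet00 (i : Fin 3) (x : Pt) : pd i (fun y => gmet y 0 0) x = 0 :=
  pd_gmet_c i x 0 0 (-1) (fun y => by simp [gmet])
@[simp] lemma pd_gmet01 (i : Fin 3) (x : Pt) : pd i (fun y => gmet y 0 1) x = 0 :=
  pd_gmet_c i x 0 1 0 (fun y => by simp [gmet])
@[simp] lemma pd_gmet02 (i : Fin 3) (x : Pt) : pd i (fun y => gmet y 0 2) x = 0 :=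
  pd_gmet_c i x 0 2 0 (fun y => by simp [gmet])
@[simp] lemma pd_gmet10 (i : Fin 3) (x : Pt) : pd i (fun y => gmet y 1 0) x = 0 :=
  pd_gmet_c i x 1 0 0 (fun y => by simp [gmet])
@[simp] lemma pd_gmet12 (i : Fin 3) (x : Pt) : pd i (fun y => gmet y 1 2) x = 0 :=
  pd_gmet_c i x 1 2 0 (fun y => by simp [gmet])
@[simp] lemma pd_gmet20 (i : Fin 3) (x : Pt) : pd i (fun y => gmet y 2 0) x = 0 :=
  pd_gmet_c i x 2 0 0 (fun y => by simp [gmet])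
@[simp] lemma pd_gmet21 (i : Fin 3) (x : Pt) : pd i (fun y => gmet y 2 1) x = 0 :=
  pd_gmet_c i x 2 1 0 (fun y => by simp [gmet])

@[simp] lemma pd_gmet11 (i : Fin 3) (x : Pt) :
    pd i (fun y => gmet y 1 1) x =
      if i = 0 then 2 * Real.cosh (x 0) * Real.sinh (x 0) else 0 := by
  have e : (fun y => gmet y 1 1)
      = fun y : Pt => (fun t => Real.cosh t ^ 2) (y 0) * (fun _ : ℝ => (1:ℝ)) (y 1)
          * (fun _ : ℝ => (1:ℝ)) (y 2) := by
    funext y; simp [gmet]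
  rw [e, pd_m3 _ _ _ _ _ _ hd_cosh_sq (fun t => hd_const 1 t) (fun t => hd_const 1 t)]
  fin_cases i <;> norm_num

@[simp] lemma pd_gmet22 (i : Fin 3) (x : Pt) :
    pd i (fun y => gmet y 2 2) x =
      if i = 0 then 2 * Real.cosh (x 0) * Real.sinh (x 0) * Real.sin (x 1) ^ 2
      else if i = 1 then Real.cosh (x 0) ^ 2 * (2 * Real.sin (x 1) * Real.cos (x 1))
      else 0 := by
  have e : (fun y => gmet y 2 2)
      = fun y : Pt => (fun t => Real.cosh t ^ 2) (y 0) * (fun t => Real.sin t ^ 2) (y 1)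
          * (fun _ : ℝ => (1:ℝ)) (y 2) := by
    funext y; simp [gmet]
  rw [e, pd_m3 _ _ _ _ _ _ hd_cosh_sq hd_sin_sq (fun t => hd_const 1 t)]
  fin_cases i <;> norm_num

lemma chr00 (x : Pt) (c : Fin 3) : chr x 0 0 c = 0 := by
  fin_cases c <;> simp [chr, Fin.sum_univ_three, ginv]

lemma chr110 (x : Pt) : chr x 1 1 0 = Real.sinh (x 0) * Real.cosh (x 0) := by
  simp [chr, Fin.sum_univ_three, ginv]; ring

lemma chr111 (x : Pt) : chr x 1 1 1 = 0 := by
  simp [chr, Fin.sum_univ_three, ginv]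

lemma chr112 (x : Pt) : chr x 1 1 2 = 0 := by
  simp [chr, Fin.sum_univ_three, ginv]

lemma chr220 (x : Pt) :
    chr x 2 2 0 = Real.sinh (x 0) * Real.cosh (x 0) * Real.sin (x 1) ^ 2 := by
  simp [chr, Fin.sum_univ_three, ginv]; ring

lemma chr221 (x : Pt) : chr x 2 2 1 = -(Real.sin (x 1) * Real.cos (x 1)) := by
  have hc := cosh_ne (x 0)
  simp [chr, Fin.sum_univ_three, ginv]
  field_simp

lemma chr222 (x : Pt) : chr x 2 2 2 = 0 := by
  simp [chr, Fin.sum_univ_three, ginv]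

lemma wave_aux (G H G' H' G'' H'' : ℝ → ℝ)
    (hG : ∀ t, HasDerivAt G (G' t) t) (hG2 : ∀ t, HasDerivAt G' (G'' t) t)
    (hH : ∀ t, HasDerivAt H (H' t) t) (hH2 : ∀ t, HasDerivAt H' (H'' t) t)
    (x : Pt) :
    boxS (fun y : Pt => gfun (y 0) * G (y 1) * H (y 2)) x =
      -(gsec (x 0) * G (x 1) * H (x 2))
      + (Real.cosh (x 0) ^ 2)⁻¹ * (gfun (x 0) * G'' (x 1) * H (x 2)
          - Real.sinh (x 0) * Real.cosh (x 0) * (gper (x 0) * G (x 1) * H (x 2)))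
      + (Real.cosh (x 0) ^ 2 * Real.sin (x 1) ^ 2)⁻¹ * (gfun (x 0) * G (x 1) * H'' (x 2)
          - Real.sinh (x 0) * Real.cosh (x 0) * Real.sin (x 1) ^ 2
              * (gper (x 0) * G (x 1) * H (x 2))
          + Real.sin (x 1) * Real.cos (x 1) * (gfun (x 0) * G' (x 1) * H (x 2))) := by
  have e0 : pd 0 (fun y : Pt => gfun (y 0) * G (y 1) * H (y 2))
      = fun y : Pt => gper (y 0) * G (y 1) * H (y 2) := by
    funext y
    rw [pd_m3 _ _ _ _ _ _ hasDerivAt_gfun hG hH]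
    simp
  have e1 : pd 1 (fun y : Pt => gfun (y 0) * G (y 1) * H (y 2))
      = fun y : Pt => gfun (y 0) * G' (y 1) * H (y 2) := by
    funext y
    rw [pd_m3 _ _ _ _ _ _ hasDerivAt_gfun hG hH]
    simp
  have e2 : pd 2 (fun y : Pt => gfun (y 0) * G (y 1) * H (y 2))
      = fun y : Pt => gfun (y 0) * G (y 1) * H' (y 2) := by
    funext y
    rw [pd_m3 _ _ _ _ _ _ hasDerivAt_gfun hG hH]
    simp
  have q00 : pd 0 (fun y : Pt => gper (y 0) * G (y 1) * H (y 2)) x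
      = gsec (x 0) * G (x 1) * H (x 2) := by
    rw [pd_m3 _ _ _ _ _ _ hasDerivAt_gper hG hH]; simp
  have q11 : pd 1 (fun y : Pt => gfun (y 0) * G' (y 1) * H (y 2)) x
      = gfun (x 0) * G'' (x 1) * H (x 2) := by
    rw [pd_m3 _ _ _ _ _ _ hasDerivAt_gfun hG2 hH]; simp
  have q22 : pd 2 (fun y : Pt => gfun (y 0) * G (y 1) * H' (y 2)) x
      = gfun (x 0) * G (x 1) * H'' (x 2) := by
    rw [pd_m3 _ _ _ _ _ _ hasDerivAt_gfun hG hH2]; simp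
  simp only [boxS, hess, covD1, Fin.sum_univ_three, ginv]
  simp only [e0, e1, e2]
  simp only [Fin.isValue, show ((0:Fin 3) = 1) = False by simp, show ((0:Fin 3) = 2) = False by simp,
    show ((1:Fin 3) = 0) = False by simp, show ((1:Fin 3) = 2) = False by simp,
    show ((2:Fin 3) = 0) = False by simp, show ((2:Fin 3) = 1) = False by simp,
    show ((0:Fin 3) = 0) = True by simp, show ((1:Fin 3) = 1) = True by simp,
    show ((2:Fin 3) = 2) = True by simp, if_true, if_false, ite_true, ite_false]
  simp only [q00, q11, q22, chr00, chr110, chr111, chr112, chr220, chr221, chr222]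
  ring

/-- Each `ζ̂_k` satisfies `□ζ̂_k + 3ζ̂_k = 0` on dS₃ and is parity even. -/
theorem zetahatk_wave_and_even :
    ∀ k : Fin 3,
      (∀ x : Pt, Real.sin (x 1) ≠ 0 → boxS (zetahatk k) x + 3 * zetahatk k x = 0) ∧
      (∀ x : Pt, zetahatk k (parity x) = zetahatk k x) := by
  intro k
  constructor
  · intro x hs
    have hc := cosh_ne (x 0)
    have hz : ∀ y : Pt, (2 * Real.sinh (y 0) + Real.tanh (y 0) / Real.cosh (y 0)) = gfun (y 0) := by
      intro y
      rw [Real.tanh_eq_sinh_div_cosh, gfun, div_div, ← pow_two]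
    fin_cases k
    · show boxS (zetahatk 0) x + 3 * zetahatk 0 x = 0
      have e : zetahatk 0 = fun y : Pt => gfun (y 0) * Real.cos (y 1) * (fun _ : ℝ => (1:ℝ)) (y 2) := by
        funext y; rw [zetahatk, hz y]; simp [sph]
      rw [e, wave_aux _ _ (fun t => -Real.sin t) (fun _ => 0) (fun t => -Real.cos t) (fun _ => 0)
        Real.hasDerivAt_cos (fun t => (Real.hasDerivAt_sin t).neg)
        (fun t => hd_const 1 t) (fun t => hd_const 0 t)]
      have h1 := Real.cosh_sq (x 0)
      unfold gfun gper gsec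
      field_simp
      linear_combination (2 * Real.sinh (x 0) * Real.cos (x 1) * Real.sin (x 1) ^ 2
        ) * h1
    · show boxS (zetahatk 1) x + 3 * zetahatk 1 x = 0
      have e : zetahatk 1 = fun y : Pt => gfun (y 0) * Real.sin (y 1) * Real.cos (y 2) := by
        funext y; rw [zetahatk, hz y]; simp [sph]; ring
      rw [e, wave_aux _ _ Real.cos (fun t => -Real.sin t) (fun t => -Real.sin t) (fun t => -Real.cos t)
        Real.hasDerivAt_sin Real.hasDerivAt_cos
        Real.hasDerivAt_cos (fun t => (Real.hasDerivAt_sin t).neg)]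
      have h1 := Real.cosh_sq (x 0)
      have h2 := Real.sin_sq_add_cos_sq (x 1)
      unfold gfun gper gsec
      field_simp
      linear_combination
        ((Real.sinh (x 0) + 2 * Real.sinh (x 0) * Real.cosh (x 0) ^ 2)
            * Real.cos (x 2)) * h2
          + (2 * Real.sinh (x 0) * Real.sin (x 1) ^ 2 * Real.cos (x 2)) * h1
    · show boxS (zetahatk 2) x + 3 * zetahatk 2 x = 0
      have e : zetahatk 2 = fun y : Pt => gfun (y 0) * Real.sin (y 1) * Real.sin (y 2) := by
        funext y; rw [zetahatk, hz y]; simp [sph]; ring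
      rw [e, wave_aux _ _ Real.cos Real.cos (fun t => -Real.sin t) (fun t => -Real.sin t)
        Real.hasDerivAt_sin Real.hasDerivAt_cos
        Real.hasDerivAt_sin Real.hasDerivAt_cos]
      have h1 := Real.cosh_sq (x 0)
      have h2 := Real.sin_sq_add_cos_sq (x 1)
      unfold gfun gper gsec
      field_simp
      linear_combination
        ((Real.sinh (x 0) + 2 * Real.sinh (x 0) * Real.cosh (x 0) ^ 2)
            * Real.sin (x 2)) * h2
          + (2 * Real.sinh (x 0) * Real.sin (x 1) ^ 2 * Real.sin (x 2)) * h1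
  · intro x
    have p0 : parity x 0 = -(x 0) := by simp [parity]
    have p1 : parity x 1 = Real.pi - x 1 := by simp [parity]
    have p2 : parity x 2 = x 2 + Real.pi := by simp [parity]
    fin_cases k <;>
      simp [zetahatk, sph, p0, p1, p2, Real.cos_pi_sub, Real.sin_pi_sub,
        Real.sinh_neg, Real.tanh_neg, Real.cosh_neg, Real.cos_add, Real.sin_add] <;>
      ring
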